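/- No graph on n vertices is r-robust for any r > ⌈n/2⌉. -/

import Mathlib

variable {V : Type*}

def rReachable [Fintype V] [DecidableEq V] (G : SimpleGraph V) [DecidableRel G.Adj]
    (S : Finset V) (r : ℕ) : Prop :=
  ∃ i ∈ S, r ≤ (G.neighborFinset i \ S).card

def rRobust [Fintype V] [DecidableEq V] (G : SimpleGraph V) [DecidableRel G.Adj]
    (r : ℕ) : Prop :=
  ∀ S₁ S₂ : Finset V, S₁.Nonempty → S₂.Nonempty → Disjoint S₁ S₂ →
    rReachable G S₁ r ∨ rReachable G S₂ r

theorem stmt_2 [Fintype V] [DecidableEq V] (G : SimpleGraph V) [DecidableRel G.Adj]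
    (hn : 2 ≤ Fintype.card V) (r : ℕ) (hr : (Fintype.card V + 1) / 2 < r) :
    ¬ rRobust G r := by
  intro hrob
  set n := Fintype.card V with hnc
  have hk : (n + 1) / 2 ≤ n := by omega
  obtain ⟨S, hSu, hScard⟩ := Finset.exists_subset_card_eq (s := (Finset.univ : Finset V))
    (n := (n + 1) / 2) (by simpa using hk)
  -- S has card (n+1)/2
  have hSne : S.Nonempty := Finset.card_pos.mp (by omega)
  have hScne : Sᶜ.Nonempty := by
    rw [← Finset.card_pos, Finset.card_compl, hScard]
    omega
  have hdisj : Disjoint S Sᶜ := disjoint_compl_right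
  have bound : ∀ (T : Finset V) (i : V), (G.neighborFinset i \ T).card ≤ n - T.card := by
    intro T i
    calc (G.neighborFinset i \ T).card ≤ (Finset.univ \ T).card :=
          Finset.card_le_card (Finset.sdiff_subset_sdiff (Finset.subset_univ _) le_rfl)
      _ = n - T.card := by simp [Finset.card_sdiff_of_subset (Finset.subset_univ T), hnc]
  rcases hrob S Sᶜ hSne hScne hdisj with ⟨i, _, hi⟩ | ⟨i, _, hi⟩
  · have := bound S i
    rw [hScard] at this
    omega
  · have := bound Sᶜ i
    rw [Finset.card_compl, hScard] at this
    omega
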